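/- Suppose s₁, s₂, s₃, s₄ : [0,1] → ℝ are continuously differentiable and trace rectangles gracing γ on [0,1], and suppose there is a constant r > 0 with Y(t) = r·X(t) for all t ∈ [0,1] (the rectangles all have the same aspect ratio). Then A is constant on [0,1]; in particular A(1) = A(0). -/

import Mathlib

noncomputable section

/-- The planar cross product `det(u,v) = u₁v₂ − u₂v₁`. -/
def pdet (u v : EuclideanSpace ℝ (Fin 2)) : ℝ := u 0 * v 1 - u 1 * v 0

private lemma rect_side (a b c d r : ℝ) (hr : 0 < r) (h1 : a*c + b*d = 0)
    (h2 : c^2 + d^2 = r^2*(a^2+b^2)) (h3 : 0 < a*d - b*c) : c = -r*b ∧ d = r*a := by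
  have key : a*d - b*c = r*(a^2+b^2) := by
    have hsq : (a*d - b*c)^2 = (r*(a^2+b^2))^2 := by
      linear_combination (a^2+b^2)*h2 - (a*c+b*d)*h1
    have hpos : 0 ≤ r*(a^2+b^2) := by positivity
    nlinarith [sq_nonneg (a*d - b*c - r*(a^2+b^2))]
  have hab : 0 < a^2 + b^2 := by nlinarith
  constructor
  · have h : c*(a^2+b^2) = (-r*b)*(a^2+b^2) := by linear_combination a*h1 - b*key
    exact mul_right_cancel₀ (ne_of_gt hab) h
  · have h : d*(a^2+b^2) = (r*a)*(a^2+b^2) := by linear_combination b*h1 + a*key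
    exact mul_right_cancel₀ (ne_of_gt hab) h

private lemma coordDeriv (γ : ℝ → EuclideanSpace ℝ (Fin 2)) (hγ : Differentiable ℝ γ)
    {s : ℝ → ℝ} {I : Set ℝ} {t d : ℝ} (hs : HasDerivWithinAt s d I t) (i : Fin 2) :
    HasDerivWithinAt (fun t => γ (s t) i) (d * deriv γ (s t) i) I t := by
  have h1 : HasDerivWithinAt (fun t => γ (s t)) (d • deriv γ (s t)) I t :=
    (hγ (s t)).hasDerivAt.scomp_hasDerivWithinAt t hs
  have h2 := (EuclideanSpace.proj (𝕜 := ℝ) i).hasFDerivAt.comp_hasDerivWithinAt t h1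
  exact h2

private lemma norm_sq2 (v : EuclideanSpace ℝ (Fin 2)) : ‖v‖^2 = v 0^2 + v 1^2 := by
  rw [← real_inner_self_eq_norm_sq, PiLp.inner_apply, Fin.sum_univ_two]
  ring_nf
  simp [sq]

/-- If a continuously differentiable path of rectangles gracing `γ` has
constant aspect ratio (`Y = r·X` with `r > 0`), then `A` is constant on
`[0,1]`; in particular `A 1 = A 0`. -/
theorem stmt10
    (γ : ℝ → EuclideanSpace ℝ (Fin 2)) (hγ : ContDiff ℝ 1 γ)
    (hper : ∀ s : ℝ, γ (s + 1) = γ s)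
    (s₁ s₂ s₃ s₄ : ℝ → ℝ)
    (hc₁ : ContDiffOn ℝ 1 s₁ (Set.Icc (0:ℝ) 1)) (hc₂ : ContDiffOn ℝ 1 s₂ (Set.Icc (0:ℝ) 1))
    (hc₃ : ContDiffOn ℝ 1 s₃ (Set.Icc (0:ℝ) 1)) (hc₄ : ContDiffOn ℝ 1 s₄ (Set.Icc (0:ℝ) 1))
    (hpar : ∀ t ∈ Set.Icc (0:ℝ) 1, γ (s₁ t) + γ (s₃ t) = γ (s₂ t) + γ (s₄ t))
    (hperp : ∀ t ∈ Set.Icc (0:ℝ) 1, inner ℝ (γ (s₂ t) - γ (s₁ t)) (γ (s₄ t) - γ (s₁ t)) = (0 : ℝ))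
    (hccw : ∀ t ∈ Set.Icc (0:ℝ) 1, pdet (γ (s₂ t) - γ (s₁ t)) (γ (s₄ t) - γ (s₁ t)) > 0)
    (X Y : ℝ → ℝ)
    (hX : X = fun t => ‖γ (s₂ t) - γ (s₁ t)‖)
    (hY : Y = fun t => ‖γ (s₃ t) - γ (s₂ t)‖)
    (A₁ A₂ A₃ A₄ : ℝ → ℝ)
    (hA₁ : A₁ = fun t => (1/2) * (∫ s in (s₁ t)..(s₂ t), pdet (γ s) (deriv γ s))
        + (1/2) * pdet (γ (s₂ t)) (γ (s₁ t)))
    (hA₂ : A₂ = fun t => (1/2) * (∫ s in (s₂ t)..(s₃ t), pdet (γ s) (deriv γ s))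
        + (1/2) * pdet (γ (s₃ t)) (γ (s₂ t)))
    (hA₃ : A₃ = fun t => (1/2) * (∫ s in (s₃ t)..(s₄ t), pdet (γ s) (deriv γ s))
        + (1/2) * pdet (γ (s₄ t)) (γ (s₃ t)))
    (hA₄ : A₄ = fun t => (1/2) * (∫ s in (s₄ t)..(s₁ t + 1), pdet (γ s) (deriv γ s))
        + (1/2) * pdet (γ (s₁ t + 1)) (γ (s₄ t)))
    (A : ℝ → ℝ) (hA : A = fun t => (A₁ t + A₃ t) - (A₂ t + A₄ t))
    (r : ℝ) (hr : 0 < r) (hratio : ∀ t ∈ Set.Icc (0:ℝ) 1, Y t = r * X t) :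
    (∀ t ∈ Set.Icc (0:ℝ) 1, A t = A 0) ∧ A 1 = A 0 := by
  have hγd : Differentiable ℝ γ := hγ.differentiable one_ne_zero
  have hγc : Continuous γ := hγ.continuous
  have hγ' : Continuous (deriv γ) := hγ.continuous_deriv le_rfl
  -- periodicity of the derivative
  have hperd : ∀ s : ℝ, deriv γ (s + 1) = deriv γ s := by
    intro s
    have h2 : HasDerivAt (γ ∘ fun x => x + 1) ((1:ℝ) • deriv γ (s+1)) s :=
      (hγd (s+1)).hasDerivAt.scomp s ((hasDerivAt_id s).add_const 1)
    have h3 : (γ ∘ fun x => x + 1) = γ := funext fun x => hper x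
    rw [h3, one_smul] at h2
    exact h2.unique (hγd s).hasDerivAt
  -- the integrand is continuous
  have hFc : Continuous fun s => pdet (γ s) (deriv γ s) := by
    have hcc : ∀ i : Fin 2, Continuous fun x => γ x i :=
      fun i => (EuclideanSpace.proj (𝕜 := ℝ) i).continuous.comp hγc
    have hcc' : ∀ i : Fin 2, Continuous fun x => deriv γ x i :=
      fun i => (EuclideanSpace.proj (𝕜 := ℝ) i).continuous.comp hγ'
    show Continuous fun s => γ s 0 * deriv γ s 1 - γ s 1 * deriv γ s 0
    exact ((hcc 0).mul (hcc' 1)).sub ((hcc 1).mul (hcc' 0))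
  set G : ℝ → ℝ := fun x => ∫ s in (0:ℝ)..x, pdet (γ s) (deriv γ s) with hGdef
  have hG : ∀ x : ℝ, HasDerivAt G (pdet (γ x) (deriv γ x)) x := fun x =>
    intervalIntegral.integral_hasDerivAt_right (hFc.intervalIntegrable 0 x)
      (hFc.stronglyMeasurableAtFilter _ _) hFc.continuousAt
  have hsplit : ∀ a b : ℝ, (∫ s in a..b, pdet (γ s) (deriv γ s)) = G b - G a := by
    intro a b
    rw [hGdef]
    exact (intervalIntegral.integral_interval_sub_left (hFc.intervalIntegrable 0 b)
      (hFc.intervalIntegrable 0 a)).symm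
  -- rewrite A in a convenient form
  have hAeq : A = fun t => 1/2 * (G (s₂ t) - G (s₁ t) - (G (s₃ t) - G (s₂ t))
        + (G (s₄ t) - G (s₃ t)) - (G (s₁ t + 1) - G (s₄ t)))
      + 1/2 * (γ (s₂ t) 0 * γ (s₁ t) 1 - γ (s₂ t) 1 * γ (s₁ t) 0
        - (γ (s₃ t) 0 * γ (s₂ t) 1 - γ (s₃ t) 1 * γ (s₂ t) 0)
        + (γ (s₄ t) 0 * γ (s₃ t) 1 - γ (s₄ t) 1 * γ (s₃ t) 0)
        - (γ (s₁ t) 0 * γ (s₄ t) 1 - γ (s₁ t) 1 * γ (s₄ t) 0)) := by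
    funext t
    simp only [hA, hA₁, hA₂, hA₃, hA₄]
    simp only [hsplit]
    simp only [hper, pdet]
    ring
  -- pointwise geometric normalization : v = r·J u
  have hgeo : ∀ t ∈ Set.Icc (0:ℝ) 1,
      γ (s₄ t) 0 - γ (s₁ t) 0 = -r * (γ (s₂ t) 1 - γ (s₁ t) 1)
      ∧ γ (s₄ t) 1 - γ (s₁ t) 1 = r * (γ (s₂ t) 0 - γ (s₁ t) 0) := by
    intro t ht
    have h1 : (γ (s₂ t) 0 - γ (s₁ t) 0) * (γ (s₄ t) 0 - γ (s₁ t) 0)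
        + (γ (s₂ t) 1 - γ (s₁ t) 1) * (γ (s₄ t) 1 - γ (s₁ t) 1) = 0 := by
      have h := hperp t ht
      rw [PiLp.inner_apply, Fin.sum_univ_two] at h
      simpa [mul_comm] using h
    have hv : γ (s₃ t) - γ (s₂ t) = γ (s₄ t) - γ (s₁ t) := by
      have h := hpar t ht
      rw [sub_eq_sub_iff_add_eq_add, add_comm (γ (s₃ t)), h, add_comm]
    have h2 : (γ (s₄ t) 0 - γ (s₁ t) 0)^2 + (γ (s₄ t) 1 - γ (s₁ t) 1)^2
        = r^2 * ((γ (s₂ t) 0 - γ (s₁ t) 0)^2 + (γ (s₂ t) 1 - γ (s₁ t) 1)^2) := by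
      have h := hratio t ht
      rw [hX, hY] at h
      simp only at h
      rw [hv] at h
      have h2 := congrArg (fun z : ℝ => z^2) h
      simp only [mul_pow] at h2
      rw [norm_sq2, norm_sq2] at h2
      simpa [PiLp.sub_apply] using h2
    have h3 : 0 < (γ (s₂ t) 0 - γ (s₁ t) 0) * (γ (s₄ t) 1 - γ (s₁ t) 1)
        - (γ (s₂ t) 1 - γ (s₁ t) 1) * (γ (s₄ t) 0 - γ (s₁ t) 0) := by
      have h := hccw t ht
      simp only [pdet, PiLp.sub_apply] at h
      linarith
    exact rect_side _ _ _ _ r hr h1 h2 h3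
  -- the derivative of A vanishes on [0,1]
  have key : ∀ t ∈ Set.Icc (0:ℝ) 1, HasDerivWithinAt A 0 (Set.Icc (0:ℝ) 1) t := by
    intro t ht
    have hu : UniqueDiffWithinAt ℝ (Set.Icc (0:ℝ) 1) t := uniqueDiffOn_Icc one_pos t ht
    set D1 := derivWithin s₁ (Set.Icc (0:ℝ) 1) t with hD1def
    set D2 := derivWithin s₂ (Set.Icc (0:ℝ) 1) t with hD2def
    set D3 := derivWithin s₃ (Set.Icc (0:ℝ) 1) t with hD3def
    set D4 := derivWithin s₄ (Set.Icc (0:ℝ) 1) t with hD4def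
    have hD1 : HasDerivWithinAt s₁ D1 (Set.Icc (0:ℝ) 1) t :=
      ((hc₁.differentiableOn one_ne_zero) t ht).hasDerivWithinAt
    have hD2 : HasDerivWithinAt s₂ D2 (Set.Icc (0:ℝ) 1) t :=
      ((hc₂.differentiableOn one_ne_zero) t ht).hasDerivWithinAt
    have hD3 : HasDerivWithinAt s₃ D3 (Set.Icc (0:ℝ) 1) t :=
      ((hc₃.differentiableOn one_ne_zero) t ht).hasDerivWithinAt
    have hD4 : HasDerivWithinAt s₄ D4 (Set.Icc (0:ℝ) 1) t :=
      ((hc₄.differentiableOn one_ne_zero) t ht).hasDerivWithinAt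
    have hP1 : ∀ i : Fin 2, HasDerivWithinAt (fun y => γ (s₁ y) i)
        (D1 * deriv γ (s₁ t) i) (Set.Icc (0:ℝ) 1) t := fun i => coordDeriv γ hγd hD1 i
    have hP2 : ∀ i : Fin 2, HasDerivWithinAt (fun y => γ (s₂ y) i)
        (D2 * deriv γ (s₂ t) i) (Set.Icc (0:ℝ) 1) t := fun i => coordDeriv γ hγd hD2 i
    have hP3 : ∀ i : Fin 2, HasDerivWithinAt (fun y => γ (s₃ y) i)
        (D3 * deriv γ (s₃ t) i) (Set.Icc (0:ℝ) 1) t := fun i => coordDeriv γ hγd hD3 i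
    have hP4 : ∀ i : Fin 2, HasDerivWithinAt (fun y => γ (s₄ y) i)
        (D4 * deriv γ (s₄ t) i) (Set.Icc (0:ℝ) 1) t := fun i => coordDeriv γ hγd hD4 i
    have hG1 : HasDerivWithinAt (fun y => G (s₁ y))
        (pdet (γ (s₁ t)) (deriv γ (s₁ t)) * D1) (Set.Icc (0:ℝ) 1) t :=
      (hG (s₁ t)).comp_hasDerivWithinAt t hD1
    have hG2 : HasDerivWithinAt (fun y => G (s₂ y))
        (pdet (γ (s₂ t)) (deriv γ (s₂ t)) * D2) (Set.Icc (0:ℝ) 1) t :=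
      (hG (s₂ t)).comp_hasDerivWithinAt t hD2
    have hG3 : HasDerivWithinAt (fun y => G (s₃ y))
        (pdet (γ (s₃ t)) (deriv γ (s₃ t)) * D3) (Set.Icc (0:ℝ) 1) t :=
      (hG (s₃ t)).comp_hasDerivWithinAt t hD3
    have hG4 : HasDerivWithinAt (fun y => G (s₄ y))
        (pdet (γ (s₄ t)) (deriv γ (s₄ t)) * D4) (Set.Icc (0:ℝ) 1) t :=
      (hG (s₄ t)).comp_hasDerivWithinAt t hD4
    have hG5 : HasDerivWithinAt (fun y => G (s₁ y + 1))
        (pdet (γ (s₁ t)) (deriv γ (s₁ t)) * D1) (Set.Icc (0:ℝ) 1) t := by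
      have h := (hG (s₁ t + 1)).comp_hasDerivWithinAt t (hD1.add_const 1)
      rwa [hper (s₁ t), hperd (s₁ t)] at h
    -- derivative relations from hpar
    have e5 : ∀ i : Fin 2, D1 * deriv γ (s₁ t) i + D3 * deriv γ (s₃ t) i
        - D2 * deriv γ (s₂ t) i - D4 * deriv γ (s₄ t) i = 0 := by
      intro i
      have hφz : HasDerivWithinAt
          (fun y => γ (s₁ y) i + γ (s₃ y) i - γ (s₂ y) i - γ (s₄ y) i) 0
          (Set.Icc (0:ℝ) 1) t := by
        refine (hasDerivWithinAt_const t _ (0:ℝ)).congr (fun y hy => ?_) ?_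
        · have h := congrArg (fun w : EuclideanSpace ℝ (Fin 2) => w i) (hpar y hy)
          simp only [PiLp.add_apply] at h
          linarith
        · have h := congrArg (fun w : EuclideanSpace ℝ (Fin 2) => w i) (hpar t ht)
          simp only [PiLp.add_apply] at h
          linarith
      have hφd : HasDerivWithinAt
          (fun y => γ (s₁ y) i + γ (s₃ y) i - γ (s₂ y) i - γ (s₄ y) i)
          (D1 * deriv γ (s₁ t) i + D3 * deriv γ (s₃ t) i
            - D2 * deriv γ (s₂ t) i - D4 * deriv γ (s₄ t) i) (Set.Icc (0:ℝ) 1) t :=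
        (((hP1 i).add (hP3 i)).sub (hP2 i)).sub (hP4 i)
      exact (hφd.derivWithin hu) ▸ (hφz.derivWithin hu)
    -- derivative relations from the geometric normalization
    have e7 : D4 * deriv γ (s₄ t) 0 - D1 * deriv γ (s₁ t) 0
        + r * (D2 * deriv γ (s₂ t) 1 - D1 * deriv γ (s₁ t) 1) = 0 := by
      have hφz : HasDerivWithinAt
          (fun y => γ (s₄ y) 0 - γ (s₁ y) 0 + r * (γ (s₂ y) 1 - γ (s₁ y) 1)) 0
          (Set.Icc (0:ℝ) 1) t := by
        refine (hasDerivWithinAt_const t _ (0:ℝ)).congr (fun y hy => ?_) ?_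
        · have h := (hgeo y hy).1; linarith
        · have h := (hgeo t ht).1; linarith
      have hφd : HasDerivWithinAt
          (fun y => γ (s₄ y) 0 - γ (s₁ y) 0 + r * (γ (s₂ y) 1 - γ (s₁ y) 1))
          (D4 * deriv γ (s₄ t) 0 - D1 * deriv γ (s₁ t) 0
            + r * (D2 * deriv γ (s₂ t) 1 - D1 * deriv γ (s₁ t) 1)) (Set.Icc (0:ℝ) 1) t :=
        ((hP4 0).sub (hP1 0)).add (((hP2 1).sub (hP1 1)).const_mul r)
      exact (hφd.derivWithin hu) ▸ (hφz.derivWithin hu)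
    have e8 : D4 * deriv γ (s₄ t) 1 - D1 * deriv γ (s₁ t) 1
        - r * (D2 * deriv γ (s₂ t) 0 - D1 * deriv γ (s₁ t) 0) = 0 := by
      have hφz : HasDerivWithinAt
          (fun y => γ (s₄ y) 1 - γ (s₁ y) 1 - r * (γ (s₂ y) 0 - γ (s₁ y) 0)) 0
          (Set.Icc (0:ℝ) 1) t := by
        refine (hasDerivWithinAt_const t _ (0:ℝ)).congr (fun y hy => ?_) ?_
        · have h := (hgeo y hy).2; linarith
        · have h := (hgeo t ht).2; linarith
      have hφd : HasDerivWithinAt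
          (fun y => γ (s₄ y) 1 - γ (s₁ y) 1 - r * (γ (s₂ y) 0 - γ (s₁ y) 0))
          (D4 * deriv γ (s₄ t) 1 - D1 * deriv γ (s₁ t) 1
            - r * (D2 * deriv γ (s₂ t) 0 - D1 * deriv γ (s₁ t) 0)) (Set.Icc (0:ℝ) 1) t :=
        ((hP4 1).sub (hP1 1)).sub (((hP2 0).sub (hP1 0)).const_mul r)
      exact (hφd.derivWithin hu) ▸ (hφz.derivWithin hu)
    -- pointwise relations
    have e1 : ∀ i : Fin 2, γ (s₁ t) i + γ (s₃ t) i = γ (s₂ t) i + γ (s₄ t) i := by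
      intro i
      have h := congrArg (fun w : EuclideanSpace ℝ (Fin 2) => w i) (hpar t ht)
      simpa using h
    have e3 := (hgeo t ht).1
    have e4 := (hgeo t ht).2
    -- assemble the derivative of A
    have hbig : HasDerivWithinAt A
        (1/2 * (pdet (γ (s₂ t)) (deriv γ (s₂ t)) * D2 - pdet (γ (s₁ t)) (deriv γ (s₁ t)) * D1
          - (pdet (γ (s₃ t)) (deriv γ (s₃ t)) * D3 - pdet (γ (s₂ t)) (deriv γ (s₂ t)) * D2)
          + (pdet (γ (s₄ t)) (deriv γ (s₄ t)) * D4 - pdet (γ (s₃ t)) (deriv γ (s₃ t)) * D3)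
          - (pdet (γ (s₁ t)) (deriv γ (s₁ t)) * D1 - pdet (γ (s₄ t)) (deriv γ (s₄ t)) * D4))
        + 1/2 * (D2 * deriv γ (s₂ t) 0 * γ (s₁ t) 1 + γ (s₂ t) 0 * (D1 * deriv γ (s₁ t) 1)
            - (D2 * deriv γ (s₂ t) 1 * γ (s₁ t) 0 + γ (s₂ t) 1 * (D1 * deriv γ (s₁ t) 0))
          - (D3 * deriv γ (s₃ t) 0 * γ (s₂ t) 1 + γ (s₃ t) 0 * (D2 * deriv γ (s₂ t) 1)
            - (D3 * deriv γ (s₃ t) 1 * γ (s₂ t) 0 + γ (s₃ t) 1 * (D2 * deriv γ (s₂ t) 0)))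
          + (D4 * deriv γ (s₄ t) 0 * γ (s₃ t) 1 + γ (s₄ t) 0 * (D3 * deriv γ (s₃ t) 1)
            - (D4 * deriv γ (s₄ t) 1 * γ (s₃ t) 0 + γ (s₄ t) 1 * (D3 * deriv γ (s₃ t) 0)))
          - (D1 * deriv γ (s₁ t) 0 * γ (s₄ t) 1 + γ (s₁ t) 0 * (D4 * deriv γ (s₄ t) 1)
            - (D1 * deriv γ (s₁ t) 1 * γ (s₄ t) 0 + γ (s₁ t) 1 * (D4 * deriv γ (s₄ t) 0)))))
        (Set.Icc (0:ℝ) 1) t := by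
      rw [hAeq]
      exact ((((hG2.sub hG1).sub (hG3.sub hG2)).add (hG4.sub hG3)).sub
          (hG5.sub hG4)).const_mul (1/2) |>.add
        ((((((hP2 0).mul (hP1 1)).sub ((hP2 1).mul (hP1 0))).sub
          (((hP3 0).mul (hP2 1)).sub ((hP3 1).mul (hP2 0)))).add
          (((hP4 0).mul (hP3 1)).sub ((hP4 1).mul (hP3 0)))).sub
          (((hP1 0).mul (hP4 1)).sub ((hP1 1).mul (hP4 0))) |>.const_mul (1/2))
    have hE0 : (1/2 * (pdet (γ (s₂ t)) (deriv γ (s₂ t)) * D2 - pdet (γ (s₁ t)) (deriv γ (s₁ t)) * D1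
          - (pdet (γ (s₃ t)) (deriv γ (s₃ t)) * D3 - pdet (γ (s₂ t)) (deriv γ (s₂ t)) * D2)
          + (pdet (γ (s₄ t)) (deriv γ (s₄ t)) * D4 - pdet (γ (s₃ t)) (deriv γ (s₃ t)) * D3)
          - (pdet (γ (s₁ t)) (deriv γ (s₁ t)) * D1 - pdet (γ (s₄ t)) (deriv γ (s₄ t)) * D4))
        + 1/2 * (D2 * deriv γ (s₂ t) 0 * γ (s₁ t) 1 + γ (s₂ t) 0 * (D1 * deriv γ (s₁ t) 1)
            - (D2 * deriv γ (s₂ t) 1 * γ (s₁ t) 0 + γ (s₂ t) 1 * (D1 * deriv γ (s₁ t) 0))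
          - (D3 * deriv γ (s₃ t) 0 * γ (s₂ t) 1 + γ (s₃ t) 0 * (D2 * deriv γ (s₂ t) 1)
            - (D3 * deriv γ (s₃ t) 1 * γ (s₂ t) 0 + γ (s₃ t) 1 * (D2 * deriv γ (s₂ t) 0)))
          + (D4 * deriv γ (s₄ t) 0 * γ (s₃ t) 1 + γ (s₄ t) 0 * (D3 * deriv γ (s₃ t) 1)
            - (D4 * deriv γ (s₄ t) 1 * γ (s₃ t) 0 + γ (s₄ t) 1 * (D3 * deriv γ (s₃ t) 0)))
          - (D1 * deriv γ (s₁ t) 0 * γ (s₄ t) 1 + γ (s₁ t) 0 * (D4 * deriv γ (s₄ t) 1)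
            - (D1 * deriv γ (s₁ t) 1 * γ (s₄ t) 0 + γ (s₁ t) 1 * (D4 * deriv γ (s₄ t) 0))))) = 0 := by
      simp only [pdet]
      linear_combination
        (-(1/2) * (D2 * deriv γ (s₂ t) 1) - D3 * deriv γ (s₃ t) 1
          - (1/2) * (D4 * deriv γ (s₄ t) 1)) * (e1 0)
        + ((1/2) * (D2 * deriv γ (s₂ t) 0) + D3 * deriv γ (s₃ t) 0
          + (1/2) * (D4 * deriv γ (s₄ t) 0)) * (e1 1)
        + (D1 * deriv γ (s₁ t) 1 - D2 * deriv γ (s₂ t) 1) * e3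
        + (-(D1 * deriv γ (s₁ t) 0) + D2 * deriv γ (s₂ t) 0) * e4
        + (-(γ (s₁ t) 1) + (1/2) * γ (s₂ t) 1 + (1/2) * γ (s₄ t) 1) * (e5 0)
        + (γ (s₁ t) 0 - (1/2) * γ (s₂ t) 0 - (1/2) * γ (s₄ t) 0) * (e5 1)
        + (-(γ (s₁ t) 1) + γ (s₂ t) 1) * e7
        + (γ (s₁ t) 0 - γ (s₂ t) 0) * e8
    exact hE0 ▸ hbig
  -- conclude constancy
  have hdiff : DifferentiableOn ℝ A (Set.Icc (0:ℝ) 1) :=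
    fun x hx => (key x hx).differentiableWithinAt
  have hfd : ∀ x ∈ Set.Icc (0:ℝ) 1, fderivWithin ℝ A (Set.Icc (0:ℝ) 1) x = 0 := by
    intro x hx
    have h := (key x hx).hasFDerivWithinAt
    have h0 : (ContinuousLinearMap.toSpanSingleton ℝ (0:ℝ)) = 0 := by ext; simp
    rw [h0] at h
    exact h.fderivWithin (uniqueDiffOn_Icc one_pos x hx)
  have h0mem : (0:ℝ) ∈ Set.Icc (0:ℝ) 1 := by norm_num
  have hconst : ∀ t ∈ Set.Icc (0:ℝ) 1, A t = A 0 := fun t ht =>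
    (convex_Icc 0 1).is_const_of_fderivWithin_eq_zero hdiff hfd ht h0mem
  exact ⟨hconst, hconst 1 (by norm_num)⟩
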